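/- Consider the single-patch SIS ODE $S' = -\beta S I/(\zeta+S+I) + \gamma I$, $I' = \beta S I/(\zeta+S+I) - (\gamma+\mu) I$ with $\zeta = 0$, i.e., $S' = -\beta SI/(S+I) + \gamma I$, $I' = \beta SI/(S+I) - (\gamma+\mu)I$, with $\beta,\gamma,\mu > 0$ and initial data $S^0 \ge 0$, $I^0 > 0$. Setting $N(t) = S(t)+I(t)$ and $N^0 = S^0+I^0$, the total population satisfies the integrated identity $N(t) = N^0\left[\frac{I(t)}{I^0}e^{-(\beta-\gamma-\mu)t}\right]^{\mu/\beta}$ for all $t > 0$. -/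

import Mathlib

theorem stmt9 (β γ μ S0 I0 : ℝ) (hβ : 0 < β) (hγ : 0 < γ) (hμ : 0 < μ)
    (hS0 : 0 ≤ S0) (hI0 : 0 < I0)
    (S I : ℝ → ℝ) (hSinit : S 0 = S0) (hIinit : I 0 = I0)
    (hpos : ∀ t : ℝ, 0 ≤ t → 0 ≤ S t ∧ 0 < I t)
    (hS : ∀ t : ℝ, 0 ≤ t →
      HasDerivAt S (-(β * S t * I t) / (S t + I t) + γ * I t) t)
    (hI : ∀ t : ℝ, 0 ≤ t →
      HasDerivAt I (β * S t * I t / (S t + I t) - (γ + μ) * I t) t) :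
    ∀ t : ℝ, 0 < t →
      S t + I t =
        (S0 + I0) * ((I t / I0) * Real.exp (-(β - γ - μ) * t)) ^ (μ / β) := by
  set g : ℝ → ℝ := fun t =>
    Real.log (S t + I t) - (μ / β) * (Real.log (I t) - (β - γ - μ) * t) with hg_def
  have hg : ∀ t : ℝ, 0 ≤ t → HasDerivAt g 0 t := by
    intro t ht
    obtain ⟨hSt, hIt⟩ := hpos t ht
    have hN : 0 < S t + I t := by linarith
    have h1 := ((hS t ht).add (hI t ht)).log hN.ne'
    have h2 := (hI t ht).log hIt.ne'
    have h3 : HasDerivAt (fun t : ℝ => (β - γ - μ) * t) (β - γ - μ) t := by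
      simpa using (hasDerivAt_id t).const_mul (β - γ - μ)
    have h := h1.sub ((h2.sub h3).const_mul (μ / β))
    convert h using 1
    · rfl
    · rfl
    · rfl
    simp only [Pi.add_apply]
    field_simp
    ring
  intro t ht
  obtain ⟨hSt, hIt⟩ := hpos t ht.le
  have hNt : 0 < S t + I t := by linarith
  have hN0 : 0 < S0 + I0 := by linarith
  have hconst : g t = g 0 := by
    have := constant_of_has_deriv_right_zero (f := g) (a := 0) (b := t)
      (fun x hx => (hg x hx.1).continuousAt.continuousWithinAt)
      (fun x hx => (hg x hx.1).hasDerivWithinAt)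
    exact this t (Set.mem_Icc.mpr ⟨ht.le, le_refl t⟩)
  have hx : 0 < (I t / I0) * Real.exp (-(β - γ - μ) * t) := by positivity
  rw [Real.rpow_def_of_pos hx]
  have hlogx : Real.log ((I t / I0) * Real.exp (-(β - γ - μ) * t)) =
      Real.log (I t) - Real.log I0 + (-(β - γ - μ) * t) := by
    rw [Real.log_mul (by positivity) (Real.exp_pos _).ne', Real.log_div hIt.ne' hI0.ne',
      Real.log_exp]
  rw [hlogx]
  have hg0 : g 0 = Real.log (S0 + I0) - (μ / β) * Real.log I0 := by
    simp [hg_def, hSinit, hIinit]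
  have hgt : Real.log (S t + I t) =
      Real.log (S0 + I0) + (μ / β) * (Real.log (I t) - Real.log I0 + (-(β - γ - μ) * t)) := by
    have := hconst
    rw [hg0] at this
    simp only [hg_def] at this
    linarith [this]
  have := congrArg Real.exp hgt
  rw [Real.exp_log hNt, Real.exp_add, Real.exp_log hN0] at this
  rw [mul_comm (μ / β)] at this
  exact this
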